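/- For a random walk with exchangeable increments, E[max_{0<=k<=n} S_k] = sum_{k=1}^n E[S_k^+]/k and E[min_{0<=k<=n} S_k] = - sum_{k=1}^n E[S_k^-]/k, where S_k^+ = max(S_k,0) and S_k^- = -min(S_k,0). -/

import Mathlib

open MeasureTheory ProbabilityTheory

namespace SpitzerAux

/-! ### sup' helpers -/

lemma sup'_sub_const {s : Finset ℕ} (H : s.Nonempty) (f : ℕ → ℝ) (c : ℝ) :
    s.sup' H f - c = s.sup' H (fun x => f x - c) := by
  have := Finset.comp_sup'_eq_sup'_comp (γ := ℝ) H (f := f) (fun x : ℝ => x - c)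
    (fun x y => (max_sub_sub_right x y c).symm)
  simpa [Function.comp] using this

lemma sup'_add_const {s : Finset ℕ} (H : s.Nonempty) (f : ℕ → ℝ) (c : ℝ) :
    s.sup' H f + c = s.sup' H (fun x => f x + c) := by
  have := Finset.comp_sup'_eq_sup'_comp (γ := ℝ) H (f := f) (fun x : ℝ => x + c)
    (fun x y => (max_add_add_right x y c).symm)
  simpa [Function.comp] using this

lemma inf'_eq_neg_sup' {s : Finset ℕ} (H : s.Nonempty) (f : ℕ → ℝ) :
    s.inf' H f = -(s.sup' H (fun x => -f x)) := by
  have h1 : s.sup' H (fun x => -f x) ≤ -(s.inf' H f) :=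
    Finset.sup'_le _ _ fun x hx => neg_le_neg (Finset.inf'_le _ hx)
  have h2 : ∀ x ∈ s, -(s.sup' H fun x => -f x) ≤ f x :=
    fun x hx => neg_le.mpr (Finset.le_sup' (fun x => -f x) hx)
  exact le_antisymm (le_neg.mpr h1) (Finset.le_inf' _ _ h2)

lemma sup'_range_succ' (f : ℕ → ℝ) (r : ℕ) :
    (Finset.range (r + 1 + 1)).sup' Finset.nonempty_range_add_one f
      = max (f (r + 1)) ((Finset.range (r + 1)).sup' Finset.nonempty_range_add_one f) := by
  apply le_antisymm
  · apply Finset.sup'_le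
    intro k hk
    have hk' := Finset.mem_range.mp hk
    rcases Nat.lt_or_ge k (r + 1) with h | h
    · exact le_max_of_le_right (Finset.le_sup' f (Finset.mem_range.mpr h))
    · have : k = r + 1 := by omega
      subst this; exact le_max_left _ _
  · apply max_le
    · exact Finset.le_sup' f (Finset.mem_range.mpr (by omega))
    · exact Finset.sup'_le _ _ fun k hk =>
        Finset.le_sup' f (Finset.mem_range.mpr (by have := Finset.mem_range.mp hk; omega))

/-! ### periodic partial sums -/

variable (n : ℕ) (y : ℕ → ℝ)

/-- partial sums of the `n`-periodic extension of `y` -/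
noncomputable def ps (m : ℕ) : ℝ := ∑ i ∈ Finset.range m, y (i % n)

lemma ps_succ (m : ℕ) : ps n y (m + 1) = ps n y m + y (m % n) :=
  Finset.sum_range_succ _ _

lemma ps_add (m : ℕ) : ps n y (m + n) = ps n y m + ps n y n := by
  induction m with
  | zero => simp [ps]
  | succ m ih =>
      rw [show m + 1 + n = (m + n) + 1 by omega, ps_succ, ih, ps_succ, Nat.add_mod_right]
      ring

lemma ps_nn : ps n y n = ∑ i ∈ Finset.range n, y i := by
  refine Finset.sum_congr rfl fun i hi => ?_
  rw [Nat.mod_eq_of_lt (Finset.mem_range.mp hi)]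

/-- running max over a window of length `n` -/
noncomputable def W (hn : 0 < n) (j : ℕ) : ℝ :=
  (Finset.range n).sup' (Finset.nonempty_range_iff.mpr hn.ne') (fun k => ps n y (j + k))

lemma le_W (hn : 0 < n) {k : ℕ} (hk : k < n) (j : ℕ) :
    ps n y (j + k) ≤ W n y hn j :=
  Finset.le_sup' (fun k => ps n y (j + k)) (Finset.mem_range.mpr hk)

lemma W_le (hn : 0 < n) {j : ℕ} {c : ℝ} (h : ∀ k < n, ps n y (j + k) ≤ c) :
    W n y hn j ≤ c :=
  Finset.sup'_le _ _ fun k hk => h k (Finset.mem_range.mp hk)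

lemma cycle_sum (hn : 0 < n) :
    ∑ j ∈ Finset.range n, max 0 (ps n y (j + n) - W n y hn j) = max 0 (ps n y n) := by
  rcases le_or_gt (ps n y n) 0 with hsn | hsn
  · obtain ⟨i₀, hi₀, hmax⟩ := Finset.exists_max_image (Finset.range n) (ps n y)
      (Finset.nonempty_range_iff.mpr hn.ne')
    have hi₀' := Finset.mem_range.mp hi₀
    have hterm : ∀ j ∈ Finset.range n, max 0 (ps n y (j + n) - W n y hn j) = 0 := by
      intro j hj
      have hj' := Finset.mem_range.mp hj
      have key : ps n y (j + n) ≤ W n y hn j := by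
        rcases le_or_gt j i₀ with h | h
        · have h1 : ps n y (j + (i₀ - j)) = ps n y i₀ := by congr 1; omega
          calc ps n y (j + n) = ps n y j + ps n y n := ps_add n y j
            _ ≤ ps n y j := by linarith
            _ ≤ ps n y i₀ := hmax j hj
            _ = ps n y (j + (i₀ - j)) := h1.symm
            _ ≤ W n y hn j := le_W n y hn (by omega) j
        · have h1 : ps n y (j + (i₀ + n - j)) = ps n y (i₀ + n) := by congr 1; omega
          calc ps n y (j + n) = ps n y j + ps n y n := ps_add n y j
            _ ≤ ps n y i₀ + ps n y n := by have := hmax j hj; linarith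
            _ = ps n y (i₀ + n) := (ps_add n y i₀).symm
            _ = ps n y (j + (i₀ + n - j)) := h1.symm
            _ ≤ W n y hn j := le_W n y hn (by omega) j
      simp [max_eq_left, sub_nonpos.mpr key]
    rw [Finset.sum_congr rfl hterm]
    simp [max_eq_left hsn]
  · have hW : ∀ j, W n y hn (j + 1) = max (W n y hn j) (ps n y (j + n)) := by
      intro j
      apply le_antisymm
      · apply W_le
        intro k hk
        rcases Nat.lt_or_ge (k + 1) n with h | h
        · refine le_max_of_le_left ?_
          have h1 : ps n y (j + 1 + k) = ps n y (j + (k + 1)) := by congr 1; omega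
          rw [h1]
          exact le_W n y hn h j
        · refine le_max_of_le_right ?_
          have h1 : ps n y (j + 1 + k) = ps n y (j + n) := by congr 1; omega
          rw [h1]
      · apply max_le
        · apply W_le
          intro k hk
          rcases Nat.eq_zero_or_pos k with h | h
          · subst h
            have h2 : ps n y j ≤ ps n y (j + n) := by
              have := ps_add n y j; linarith
            have h3 : ps n y (j + n) = ps n y (j + 1 + (n - 1)) := by congr 1; omega
            calc ps n y (j + 0) = ps n y j := by norm_num
              _ ≤ ps n y (j + n) := h2
              _ = ps n y (j + 1 + (n - 1)) := h3
              _ ≤ W n y hn (j + 1) := le_W n y hn (by omega) (j + 1)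
          · have h1 : ps n y (j + k) = ps n y (j + 1 + (k - 1)) := by congr 1; omega
            rw [h1]
            exact le_W n y hn (by omega) (j + 1)
        · have h1 : ps n y (j + n) = ps n y (j + 1 + (n - 1)) := by congr 1; omega
          rw [h1]
          exact le_W n y hn (by omega) (j + 1)
    have hterm : ∀ j ∈ Finset.range n,
        max 0 (ps n y (j + n) - W n y hn j) = W n y hn (j + 1) - W n y hn j := by
      intro j _
      rw [hW j, ← max_sub_sub_right, sub_self, max_comm]
    rw [Finset.sum_congr rfl hterm, Finset.sum_range_sub (fun j => W n y hn j)]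
    have hWn : W n y hn n = W n y hn 0 + ps n y n := by
      rw [W, W, sup'_add_const]
      refine Finset.sup'_congr _ rfl fun k hk => ?_
      rw [zero_add, ← ps_add, Nat.add_comm k n]
    rw [hWn, max_eq_right hsn.le]
    ring

/-! ### cyclic shift permutations -/

open Fin.NatCast in
/-- cyclic shift by `j` on `{0,…,n-1}`, identity elsewhere. -/
noncomputable def cyc (n : ℕ) (hn : n ≠ 0) (j : ℕ) : Equiv.Perm ℕ :=
  letI : NeZero n := ⟨hn⟩
  (Equiv.addRight ((j : Fin n))).extendDomain (Fin.equivSubtype)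

open Fin.NatCast in
lemma cyc_apply_lt {n : ℕ} (hn : n ≠ 0) (j : ℕ) {i : ℕ} (hi : i < n) :
    cyc n hn j i = (i + j) % n := by
  letI : NeZero n := ⟨hn⟩
  rw [cyc, Equiv.Perm.extendDomain_apply_subtype _ Fin.equivSubtype hi]
  show (((Fin.equivSubtype.symm ⟨i, hi⟩ : Fin n) + (j : Fin n)) : Fin n).val = (i + j) % n
  have : (Fin.equivSubtype.symm ⟨i, hi⟩ : Fin n) = ⟨i, hi⟩ := rfl
  rw [this, Fin.add_def]
  simp [Fin.val_natCast, Nat.mod_add_mod, Nat.add_mod]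

lemma cyc_apply_ge {n : ℕ} (hn : n ≠ 0) (j : ℕ) {i : ℕ} (hi : n ≤ i) :
    cyc n hn j i = i := by
  letI : NeZero n := ⟨hn⟩
  exact Equiv.Perm.extendDomain_apply_not_subtype _ Fin.equivSubtype (by omega)

/-! ### partial-sum maxima -/

/-- maximum of the first `r+1` partial sums -/
noncomputable def F (r : ℕ) (y : ℕ → ℝ) : ℝ :=
  (Finset.range (r + 1)).sup' Finset.nonempty_range_add_one (fun k => ∑ i ∈ Finset.range k, y i)

lemma F_succ (r : ℕ) (y : ℕ → ℝ) :
    F (r + 1) y = max (∑ i ∈ Finset.range (r + 1), y i) (F r y) :=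
  sup'_range_succ' _ r

lemma measurable_F (r : ℕ) : Measurable (F r) := by
  induction r with
  | zero =>
      have : F 0 = fun _ => 0 := by funext y; simp [F]
      rw [this]; exact measurable_const
  | succ r ih =>
      have : F (r + 1) = fun y => max (∑ i ∈ Finset.range (r + 1), y i) (F r y) := by
        funext y; exact F_succ r y
      rw [this]
      exact (Finset.measurable_sum _ (fun i _ => measurable_pi_apply i)).max ih

lemma integrable_F {Ω : Type*} [MeasurableSpace Ω] {P : Measure Ω} [IsFiniteMeasure P]
    (g : ℕ → Ω → ℝ) (hg : ∀ i, Integrable (g i) P) (r : ℕ) :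
    Integrable (fun ω => F r (fun i => g i ω)) P := by
  induction r with
  | zero =>
      have : (fun ω => F 0 (fun i => g i ω)) = fun _ => (0 : ℝ) := by
        funext ω; simp [F]
      rw [this]; exact integrable_const 0
  | succ r ih =>
      have : (fun ω => F (r + 1) (fun i => g i ω))
          = fun ω => max (∑ i ∈ Finset.range (r + 1), g i ω) (F r (fun i => g i ω)) := by
        funext ω; exact F_succ r _
      rw [this]
      exact (integrable_finset_sum _ fun i _ => hg i).sup ih

lemma shiftsum {n : ℕ} (hn : n ≠ 0) (y : ℕ → ℝ) (j : ℕ) {k : ℕ} (hk : k ≤ n) :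
    ∑ i ∈ Finset.range k, y (cyc n hn j i) = ps n y (j + k) - ps n y j := by
  induction k with
  | zero => simp
  | succ k ih =>
      rw [Finset.sum_range_succ, ih (by omega), cyc_apply_lt hn j (show k < n by omega),
        show j + (k + 1) = (j + k) + 1 by omega, ps_succ, Nat.add_comm k j]
      ring

lemma F_shift (m : ℕ) (y : ℕ → ℝ) (j : ℕ) :
    F (m + 1) (fun i => y (cyc (m + 1) (Nat.succ_ne_zero m) j i))
      - F m (fun i => y (cyc (m + 1) (Nat.succ_ne_zero m) j i))
      = max 0 (ps (m + 1) y (j + (m + 1)) - W (m + 1) y (Nat.succ_pos m) j) := by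
  have hFr : ∀ r ≤ m + 1, F r (fun i => y (cyc (m + 1) (Nat.succ_ne_zero m) j i))
      = (Finset.range (r + 1)).sup' Finset.nonempty_range_add_one
          (fun k => ps (m + 1) y (j + k)) - ps (m + 1) y j := by
    intro r hr
    rw [sup'_sub_const]
    exact Finset.sup'_congr _ rfl fun k hk =>
      shiftsum (Nat.succ_ne_zero m) y j (by have := Finset.mem_range.mp hk; omega)
  have hwhite : W (m + 1) y (Nat.succ_pos m) j
      = (Finset.range (m + 1)).sup' Finset.nonempty_range_add_one
          (fun k => ps (m + 1) y (j + k)) := by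
    rw [W]
  rw [hFr (m + 1) le_rfl, hFr m (by omega), sup'_range_succ', ← hwhite]
  generalize ps (m + 1) y (j + (m + 1)) = a
  generalize W (m + 1) y (Nat.succ_pos m) j = b
  generalize ps (m + 1) y j = c
  rw [show max a b - c - (b - c) = max a b - b by ring, ← max_sub_sub_right, sub_self, max_comm]


lemma key_pointwise (m : ℕ) (y : ℕ → ℝ) :
    ∑ j ∈ Finset.range (m + 1),
        (F (m + 1) (fun i => y (cyc (m + 1) (Nat.succ_ne_zero m) j i))
          - F m (fun i => y (cyc (m + 1) (Nat.succ_ne_zero m) j i)))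
      = max 0 (∑ i ∈ Finset.range (m + 1), y i) := by
  rw [Finset.sum_congr rfl fun j _ => F_shift m y j, cycle_sum (m + 1) y (Nat.succ_pos m),
    ps_nn]

/-! ### probabilistic part -/

lemma aemeasurable_pi {Ω : Type*} [MeasurableSpace Ω] {P : Measure Ω} {f : ℕ → Ω → ℝ}
    (h : ∀ i, AEMeasurable (f i) P) : AEMeasurable (fun ω (i : ℕ) => f i ω) P := by
  refine ⟨fun ω i => (h i).mk _ ω, measurable_pi_iff.mpr fun i => (h i).measurable_mk, ?_⟩
  filter_upwards [ae_all_iff.mpr fun i => (h i).ae_eq_mk] with ω hω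
  exact funext fun i => hω i

lemma spitzer_max {Ω : Type*} [MeasurableSpace Ω] (P : Measure Ω) [IsProbabilityMeasure P]
    (n : ℕ) (X : ℕ → Ω → ℝ)
    (hexch : ∀ σ : Equiv.Perm ℕ, (∀ i, n ≤ i → σ i = i) →
      Measure.map (fun ω => fun i : ℕ => X (σ i) ω) P
        = Measure.map (fun ω => fun i : ℕ => X i ω) P)
    (hint : ∀ i, Integrable (X i) P) :
    ∫ ω, F n (fun i => X i ω) ∂P
      = ∑ k ∈ Finset.Icc 1 n, (∫ ω, max 0 (∑ i ∈ Finset.range k, X i ω) ∂P) / k := by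
  induction n generalizing X with
  | zero => simp [F]
  | succ m ih =>
      have ihX := ih X (fun σ hσ => hexch σ (fun i hi => hσ i (by omega))) hint
      -- notation
      set T : Ω → (ℕ → ℝ) := fun ω i => X i ω with hT
      have hTmeas : AEMeasurable T P := aemeasurable_pi fun i => (hint i).1.aemeasurable
      -- the shifted processes
      have hfix : ∀ j, ∀ i, m + 1 ≤ i → cyc (m + 1) (Nat.succ_ne_zero m) j i = i :=
        fun j i hi => cyc_apply_ge _ j hi
      set Tj : ℕ → Ω → (ℕ → ℝ) :=
        fun j ω i => X (cyc (m + 1) (Nat.succ_ne_zero m) j i) ω with hTj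
      have hTjmeas : ∀ j, AEMeasurable (Tj j) P :=
        fun j => aemeasurable_pi fun i => (hint _).1.aemeasurable
      have hmap : ∀ j, Measure.map (Tj j) P = Measure.map T P :=
        fun j => hexch (cyc (m + 1) (Nat.succ_ne_zero m) j) (hfix j)
      -- equality of integrals of F r along shifted processes
      have intF_eq : ∀ r j, ∫ ω, F r (Tj j ω) ∂P = ∫ ω, F r (T ω) ∂P := by
        intro r j
        rw [← integral_map (hTjmeas j) (measurable_F r).aestronglyMeasurable, hmap j,
          integral_map hTmeas (measurable_F r).aestronglyMeasurable]
      have intFj : ∀ r j, Integrable (fun ω => F r (Tj j ω)) P :=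
        fun r j => integrable_F _ (fun i => hint _) r
      have intFT : ∀ r, Integrable (fun ω => F r (T ω)) P :=
        fun r => integrable_F _ (fun i => hint i) r
      -- integrate the pointwise cyclic identity
      have hpt : ∀ ω, ∑ j ∈ Finset.range (m + 1),
          (F (m + 1) (Tj j ω) - F m (Tj j ω)) = max 0 (∑ i ∈ Finset.range (m + 1), X i ω) :=
        fun ω => key_pointwise m (fun i => X i ω)
      have hint_sum : ∫ ω, max 0 (∑ i ∈ Finset.range (m + 1), X i ω) ∂P
          = (m + 1 : ℝ) * (∫ ω, F (m + 1) (T ω) ∂P - ∫ ω, F m (T ω) ∂P) := by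
        calc ∫ ω, max 0 (∑ i ∈ Finset.range (m + 1), X i ω) ∂P
            = ∫ ω, ∑ j ∈ Finset.range (m + 1), (F (m + 1) (Tj j ω) - F m (Tj j ω)) ∂P := by
              exact (integral_congr_ae (Filter.Eventually.of_forall fun ω => (hpt ω).symm))
          _ = ∑ j ∈ Finset.range (m + 1), ∫ ω, (F (m + 1) (Tj j ω) - F m (Tj j ω)) ∂P :=
              integral_finset_sum _ (fun j _ => (intFj (m + 1) j).sub (intFj m j))
          _ = ∑ j ∈ Finset.range (m + 1),
                (∫ ω, F (m + 1) (T ω) ∂P - ∫ ω, F m (T ω) ∂P) := by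
              refine Finset.sum_congr rfl fun j _ => ?_
              rw [integral_sub (intFj (m + 1) j) (intFj m j), intF_eq (m + 1) j, intF_eq m j]
          _ = (m + 1 : ℝ) * (∫ ω, F (m + 1) (T ω) ∂P - ∫ ω, F m (T ω) ∂P) := by
              rw [Finset.sum_const, Finset.card_range, nsmul_eq_mul]
              push_cast
              ring
      -- conclude
      rw [Finset.sum_Icc_succ_top (by omega : 1 ≤ m + 1)]
      rw [← ihX]
      have hm1 : ((m + 1 : ℕ) : ℝ) ≠ 0 := by positivity
      have : (∫ ω, max 0 (∑ i ∈ Finset.range (m + 1), X i ω) ∂P) / ((m + 1 : ℕ) : ℝ)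
          = ∫ ω, F (m + 1) (T ω) ∂P - ∫ ω, F m (T ω) ∂P := by
        rw [hint_sum]
        push_cast
        field_simp
      rw [this]
      ring

end SpitzerAux

/-- Spitzer-type formula for a walk with exchangeable integrable increments:
`E[max_{0≤k≤n} S_k] = ∑_{k=1}^n E[S_k⁺]/k` and `E[min_{0≤k≤n} S_k] = -∑_{k=1}^n E[S_k⁻]/k`. -/
theorem spitzer_exchangeable
    {Ω : Type*} [MeasurableSpace Ω] (P : Measure Ω) [IsProbabilityMeasure P]
    (n : ℕ) (X : ℕ → Ω → ℝ)
    (hexch : ∀ σ : Equiv.Perm ℕ, (∀ i, n ≤ i → σ i = i) →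
      Measure.map (fun ω => fun i : ℕ => X (σ i) ω) P
        = Measure.map (fun ω => fun i : ℕ => X i ω) P)
    (hint : ∀ i, Integrable (X i) P)
    (S : ℕ → Ω → ℝ) (hS : ∀ m ω, S m ω = ∑ i ∈ Finset.range m, X i ω) :
    (∫ ω, (Finset.range (n + 1)).sup' Finset.nonempty_range_add_one (fun k => S k ω) ∂P
        = ∑ k ∈ Finset.Icc 1 n, (∫ ω, max (S k ω) 0 ∂P) / k) ∧
      (∫ ω, (Finset.range (n + 1)).inf' Finset.nonempty_range_add_one (fun k => S k ω) ∂P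
        = -∑ k ∈ Finset.Icc 1 n, (∫ ω, -(min (S k ω) 0) ∂P) / k) := by
  constructor
  · -- maximum part
    have hFS : ∀ ω, (Finset.range (n + 1)).sup' Finset.nonempty_range_add_one (fun k => S k ω)
        = SpitzerAux.F n (fun i => X i ω) :=
      fun ω => Finset.sup'_congr _ rfl fun k _ => hS k ω
    calc ∫ ω, (Finset.range (n + 1)).sup' Finset.nonempty_range_add_one (fun k => S k ω) ∂P
        = ∫ ω, SpitzerAux.F n (fun i => X i ω) ∂P :=
          integral_congr_ae (Filter.Eventually.of_forall hFS)
      _ = ∑ k ∈ Finset.Icc 1 n, (∫ ω, max 0 (∑ i ∈ Finset.range k, X i ω) ∂P) / k :=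
          SpitzerAux.spitzer_max P n X hexch hint
      _ = ∑ k ∈ Finset.Icc 1 n, (∫ ω, max (S k ω) 0 ∂P) / k := by
          refine Finset.sum_congr rfl fun k _ => ?_
          congr 1
          refine integral_congr_ae (Filter.Eventually.of_forall fun ω => ?_)
          simp only [hS k ω]
          exact max_comm _ _
  · -- minimum part: apply the maximum part to `-X`
    set X' : ℕ → Ω → ℝ := fun i ω => -X i ω with hX'
    have hint' : ∀ i, Integrable (X' i) P := fun i => (hint i).neg
    -- exchangeability for the negated process
    have hexch' : ∀ σ : Equiv.Perm ℕ, (∀ i, n ≤ i → σ i = i) →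
        Measure.map (fun ω => fun i : ℕ => X' (σ i) ω) P
          = Measure.map (fun ω => fun i : ℕ => X' i ω) P := by
      intro σ hσ
      set neg : (ℕ → ℝ) → (ℕ → ℝ) := fun f i => -f i with hneg
      have hnegm : Measurable neg := measurable_pi_iff.mpr fun i => (measurable_pi_apply i).neg
      have hTσ : AEMeasurable (fun ω => fun i : ℕ => X (σ i) ω) P :=
        SpitzerAux.aemeasurable_pi fun i => (hint _).1.aemeasurable
      have hT : AEMeasurable (fun ω => fun i : ℕ => X i ω) P :=
        SpitzerAux.aemeasurable_pi fun i => (hint i).1.aemeasurable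
      calc Measure.map (fun ω => fun i : ℕ => X' (σ i) ω) P
          = Measure.map (neg ∘ (fun ω => fun i : ℕ => X (σ i) ω)) P := rfl
        _ = Measure.map neg (Measure.map (fun ω => fun i : ℕ => X (σ i) ω) P) :=
            (AEMeasurable.map_map_of_aemeasurable
              (hnegm.aemeasurable) hTσ).symm
        _ = Measure.map neg (Measure.map (fun ω => fun i : ℕ => X i ω) P) := by
            rw [hexch σ hσ]
        _ = Measure.map (neg ∘ (fun ω => fun i : ℕ => X i ω)) P :=
            AEMeasurable.map_map_of_aemeasurable (hnegm.aemeasurable) hT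
        _ = Measure.map (fun ω => fun i : ℕ => X' i ω) P := rfl
    have hmax' := SpitzerAux.spitzer_max P n X' hexch' hint'
    -- rewrite everything back in terms of `S`
    have hFS' : ∀ ω, SpitzerAux.F n (fun i => X' i ω)
        = (Finset.range (n + 1)).sup' Finset.nonempty_range_add_one (fun k => -S k ω) := by
      intro ω
      refine Finset.sup'_congr _ rfl fun k _ => ?_
      rw [hS k ω, Finset.sum_neg_distrib]
    have hinf : ∀ ω, (Finset.range (n + 1)).inf' Finset.nonempty_range_add_one (fun k => S k ω)
        = -((Finset.range (n + 1)).sup' Finset.nonempty_range_add_one (fun k => -S k ω)) :=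
      fun ω => SpitzerAux.inf'_eq_neg_sup' _ _
    calc ∫ ω, (Finset.range (n + 1)).inf' Finset.nonempty_range_add_one (fun k => S k ω) ∂P
        = ∫ ω, -((Finset.range (n + 1)).sup' Finset.nonempty_range_add_one (fun k => -S k ω)) ∂P :=
          integral_congr_ae (Filter.Eventually.of_forall hinf)
      _ = -∫ ω, (Finset.range (n + 1)).sup' Finset.nonempty_range_add_one (fun k => -S k ω) ∂P :=
          integral_neg _
      _ = -∫ ω, SpitzerAux.F n (fun i => X' i ω) ∂P := by
          congr 1
          exact integral_congr_ae (Filter.Eventually.of_forall fun ω => (hFS' ω).symm)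
      _ = -∑ k ∈ Finset.Icc 1 n, (∫ ω, max 0 (∑ i ∈ Finset.range k, X' i ω) ∂P) / k := by
          rw [hmax']
      _ = -∑ k ∈ Finset.Icc 1 n, (∫ ω, -(min (S k ω) 0) ∂P) / k := by
          congr 1
          refine Finset.sum_congr rfl fun k _ => ?_
          congr 1
          refine integral_congr_ae (Filter.Eventually.of_forall fun ω => ?_)
          have h1 : ∑ i ∈ Finset.range k, X' i ω = -(S k ω) := by
            rw [hS k ω, Finset.sum_neg_distrib]
          have h2 : (0 : ℝ) ⊔ (-(S k ω)) = -(S k ω ⊓ 0) := by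
            rcases le_total (S k ω) 0 with h | h
            · rw [min_eq_left h, max_eq_right (by linarith)]
            · rw [min_eq_right h, max_eq_left (by linarith), neg_zero]
          simp only [h1]
          exact h2
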